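/- Lipschitz bound on the nonlinear residual r (Lemma 1 with the explicit constants of Appendix Lemma 2). Let f : E → ℝ and h : E → F₁ be continuously differentiable, let Φ : E → F₁ × F₂, Φ(x) = (h(x), q(x)), be a global C¹ diffeomorphism, and assume: (i) there exists m̲ > 0 with ⟨Dh(x)†v, Dh(x)†v⟩ ≥ m̲‖v‖² for all x, v, so Dh(x)∘Dh(x)† is invertible; (ii) ‖Dh(x)∘Dh(x)†‖ ≤ m̄ for all x ∈ E; (iii) the map φ(x) = −(Dh(x)∘Dh(x)†)⁻¹( Dh(x)(∇f(x)) ) is globally Lipschitz with constant L₂; (iv) Φ⁻¹ is globally Lipschitz with constant L_Ψ. Fix η* ∈ F₂, let x* = Φ⁻¹(0, η*) and λ* = φ(x*). Define, for (y,η) ∈ F₁ × F₂ and x̃ = Φ⁻¹(y,η), the residual r(η, y) = Dh(x̃)(∇f(x̃)) + (Dh(x̃)∘Dh(x̃)†)(λ*). Then ‖r(η, y)‖ ≤ m̄ L₂ L_Ψ ( ‖y‖ + ‖η − η*‖ ) for all (y, η) ∈ F₁ × F₂. -/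

import Mathlib

open scoped RealInnerProductSpace

/-- Lemma 1 with the explicit constants of Appendix Lemma 2:
Lipschitz bound on the nonlinear residual
`r(η, y) = Dh(xt)(∇f(xt)) + (Dh(xt)∘Dh(xt)†)(λ*)`, `xt = Φ⁻¹(y, η)`:
`‖r(η,y)‖ ≤ m̄ L₂ L_Ψ (‖y‖ + ‖η - η*‖)`. -/
theorem residual_lipschitz_bound
    (n m : ℕ) (hm : 1 ≤ m) (hmn : m < n)
    (f : EuclideanSpace ℝ (Fin n) → ℝ)
    (h : EuclideanSpace ℝ (Fin n) → EuclideanSpace ℝ (Fin m))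
    (q : EuclideanSpace ℝ (Fin n) → EuclideanSpace ℝ (Fin (n - m)))
    (Ψ : EuclideanSpace ℝ (Fin m) × EuclideanSpace ℝ (Fin (n - m)) → EuclideanSpace ℝ (Fin n))
    (hf : ContDiff ℝ 1 f) (hh : ContDiff ℝ 1 h) (hq : ContDiff ℝ 1 q)
    (hΨ : ContDiff ℝ 1 Ψ)
    (hleft : ∀ x, Ψ (h x, q x) = x)
    (hright : ∀ p, (h (Ψ p), q (Ψ p)) = p)
    -- (i) uniform full rank
    (mlow : ℝ) (hmlow : 0 < mlow)
    (hcoerc : ∀ (x : EuclideanSpace ℝ (Fin n)) (v : EuclideanSpace ℝ (Fin m)),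
      ⟪(ContinuousLinearMap.adjoint (fderiv ℝ h x)) v,
        (ContinuousLinearMap.adjoint (fderiv ℝ h x)) v⟫ ≥ mlow * ‖v‖ ^ 2)
    (hinv : ∀ x, IsUnit ((fderiv ℝ h x) ∘L (ContinuousLinearMap.adjoint (fderiv ℝ h x))))
    -- (ii) uniform upper bound on the Gram map
    (mup : ℝ)
    (hmup : ∀ x, ‖(fderiv ℝ h x) ∘L (ContinuousLinearMap.adjoint (fderiv ℝ h x))‖ ≤ mup)
    -- (iii) the least-squares multiplier map φ is globally Lipschitz with constant L₂
    (L₂ : ℝ)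
    (hφLip : ∀ x₁ x₂ : EuclideanSpace ℝ (Fin n),
      ‖(-(Ring.inverse ((fderiv ℝ h x₁) ∘L (ContinuousLinearMap.adjoint (fderiv ℝ h x₁)))
            ((fderiv ℝ h x₁) (gradient f x₁))))
        - (-(Ring.inverse ((fderiv ℝ h x₂) ∘L (ContinuousLinearMap.adjoint (fderiv ℝ h x₂)))
            ((fderiv ℝ h x₂) (gradient f x₂))))‖ ≤ L₂ * ‖x₁ - x₂‖)
    -- (iv) Φ⁻¹ globally Lipschitz with constant L_Ψ (ℓ² product norm)
    (LΨ : ℝ)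
    (hΨLip : ∀ p p' : EuclideanSpace ℝ (Fin m) × EuclideanSpace ℝ (Fin (n - m)),
      ‖Ψ p - Ψ p'‖ ≤ LΨ * Real.sqrt (‖p.1 - p'.1‖ ^ 2 + ‖p.2 - p'.2‖ ^ 2))
    (ηstar : EuclideanSpace ℝ (Fin (n - m)))
    (xstar : EuclideanSpace ℝ (Fin n)) (hxstar : xstar = Ψ (0, ηstar))
    (lamstar : EuclideanSpace ℝ (Fin m))
    (hlamstar : lamstar = -(Ring.inverse ((fderiv ℝ h xstar) ∘L (ContinuousLinearMap.adjoint (fderiv ℝ h xstar)))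
      ((fderiv ℝ h xstar) (gradient f xstar)))) :
    ∀ (y : EuclideanSpace ℝ (Fin m)) (η : EuclideanSpace ℝ (Fin (n - m))),
      ‖(fderiv ℝ h (Ψ (y, η))) (gradient f (Ψ (y, η)))
        + ((fderiv ℝ h (Ψ (y, η))) ∘L (ContinuousLinearMap.adjoint (fderiv ℝ h (Ψ (y, η))))) lamstar‖
      ≤ mup * L₂ * LΨ * (‖y‖ + ‖η - ηstar‖) := by

  intro y η
  set G : EuclideanSpace ℝ (Fin n) → (EuclideanSpace ℝ (Fin m) →L[ℝ] EuclideanSpace ℝ (Fin m)) :=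
    fun x => (fderiv ℝ h x) ∘L (ContinuousLinearMap.adjoint (fderiv ℝ h x)) with hG
  set φ : EuclideanSpace ℝ (Fin n) → EuclideanSpace ℝ (Fin m) :=
    fun x => -(Ring.inverse (G x)) ((fderiv ℝ h x) (gradient f x)) with hφ
  have hGinv : ∀ (x : EuclideanSpace ℝ (Fin n)) (w : EuclideanSpace ℝ (Fin m)),
      (G x) ((Ring.inverse (G x)) w) = w := by
    intro x w
    have h1 : G x * Ring.inverse (G x) = 1 := Ring.mul_inverse_cancel _ (by simpa [hG] using hinv x)
    calc (G x) ((Ring.inverse (G x)) w) = (G x * Ring.inverse (G x)) w := rfl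
      _ = w := by rw [h1]; rfl
  set xt := Ψ (y, η) with hxt
  have hkey : (fderiv ℝ h xt) (gradient f xt)
      + (G xt) lamstar = (G xt) (lamstar - φ xt) := by
    have : (G xt) (φ xt) = -((fderiv ℝ h xt) (gradient f xt)) := by
      simp only [hφ, map_neg, hGinv]
    rw [map_sub, this]
    abel
  -- nonnegativity of the constants
  have hmup0 : 0 ≤ mup := le_trans (norm_nonneg _) (hmup xt)
  have hL₂0 : 0 ≤ L₂ := by
    have h1 := hφLip (EuclideanSpace.single ⟨0, by omega⟩ (1:ℝ)) 0
    have h2 : ‖(EuclideanSpace.single ⟨0, by omega⟩ (1:ℝ)) - (0:EuclideanSpace ℝ (Fin n))‖ = 1 := by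
      simp [EuclideanSpace.norm_single]
    rw [h2, mul_one] at h1
    exact le_trans (norm_nonneg _) h1
  have hLΨ0 : 0 ≤ LΨ := by
    set p : EuclideanSpace ℝ (Fin m) × EuclideanSpace ℝ (Fin (n - m)) :=
      (EuclideanSpace.single ⟨0, hm⟩ (1:ℝ), 0)
    have hne : Ψ p ≠ Ψ (0, 0) := by
      intro hc
      have := congrArg h hc
      have h1 : h (Ψ p) = p.1 := congrArg Prod.fst (hright p)
      have h2 : h (Ψ (0, 0)) = 0 := congrArg Prod.fst (hright (0, 0))
      rw [h1, h2] at this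
      have : (1:ℝ) = 0 := by
        have := congrArg (fun v : EuclideanSpace ℝ (Fin m) => v ⟨0, hm⟩) this
        simpa [p, EuclideanSpace.single_apply] using this
      norm_num at this
    have h1 := hΨLip p (0, 0)
    have h2 : Real.sqrt (‖p.1 - (0:EuclideanSpace ℝ (Fin m))‖ ^ 2
        + ‖p.2 - (0:EuclideanSpace ℝ (Fin (n - m)))‖ ^ 2) = 1 := by
      simp [p, EuclideanSpace.norm_single]
    rw [h2, mul_one] at h1
    have h3 : 0 < ‖Ψ p - Ψ (0, 0)‖ := norm_sub_pos_iff.mpr hne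
    linarith
  -- main chain
  have step1 : ‖(G xt) (lamstar - φ xt)‖ ≤ mup * ‖lamstar - φ xt‖ :=
    le_trans ((G xt).le_opNorm _) (mul_le_mul_of_nonneg_right (hmup xt) (norm_nonneg _))
  have step2 : ‖lamstar - φ xt‖ ≤ L₂ * ‖xstar - xt‖ := by
    have := hφLip xstar xt
    simpa [hlamstar, hφ, hG, sub_neg_eq_add, sub_eq_add_neg] using this
  have step3 : ‖xstar - xt‖ ≤ LΨ * Real.sqrt (‖y‖ ^ 2 + ‖η - ηstar‖ ^ 2) := by
    have := hΨLip (0, ηstar) (y, η)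
    rw [hxstar]
    have e1 : ‖(0:EuclideanSpace ℝ (Fin m)) - y‖ = ‖y‖ := by
      rw [zero_sub, norm_neg]
    have e2 : ‖ηstar - η‖ = ‖η - ηstar‖ := norm_sub_rev _ _
    simpa [e1, e2] using this
  have step4 : Real.sqrt (‖y‖ ^ 2 + ‖η - ηstar‖ ^ 2) ≤ ‖y‖ + ‖η - ηstar‖ := by
    rw [show ‖y‖ + ‖η - ηstar‖ = Real.sqrt ((‖y‖ + ‖η - ηstar‖) ^ 2) from
      (Real.sqrt_sq (by positivity)).symm]
    apply Real.sqrt_le_sqrt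
    have h1 : 0 ≤ ‖y‖ * ‖η - ηstar‖ := by positivity
    ring_nf
    nlinarith
  calc ‖(fderiv ℝ h xt) (gradient f xt) + (G xt) lamstar‖
      = ‖(G xt) (lamstar - φ xt)‖ := by rw [hkey]
    _ ≤ mup * ‖lamstar - φ xt‖ := step1
    _ ≤ mup * (L₂ * ‖xstar - xt‖) := by
        exact mul_le_mul_of_nonneg_left step2 hmup0
    _ ≤ mup * (L₂ * (LΨ * Real.sqrt (‖y‖ ^ 2 + ‖η - ηstar‖ ^ 2))) := by
        apply mul_le_mul_of_nonneg_left _ hmup0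
        apply mul_le_mul_of_nonneg_left step3 hL₂0
    _ ≤ mup * (L₂ * (LΨ * (‖y‖ + ‖η - ηstar‖))) := by
        apply mul_le_mul_of_nonneg_left _ hmup0
        apply mul_le_mul_of_nonneg_left _ hL₂0
        exact mul_le_mul_of_nonneg_left step4 hLΨ0
    _ = mup * L₂ * LΨ * (‖y‖ + ‖η - ηstar‖) := by ring
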